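/- For positive integers q, k, m with k ≤ q ≤ m, in the weighted voting game v = [q; k, 1, …, 1] with one player of weight k and m players of weight 1, the number of swings of the weight-k player equals Σ_{i=1}^{k} C(m, q−i), and the number of swings of each weight-1 player equals C(m−1, q−1) + C(m−1, q−k−1). -/

import Mathlib

/-- Number of `i`-swings in the weighted game with quota `q`, weight function `w`,
and player set `P`: coalitions `S ⊆ P \ {i}` that are losing but become winning with `i`. -/
def swingCount (q : ℕ) (w : ℕ → ℕ) (P : Finset ℕ) (i : ℕ) : ℕ :=
  (((P.erase i).powerset).filter
    (fun S => (∑ j ∈ S, w j) < q ∧ q ≤ (∑ j ∈ S, w j) + w i)).card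

lemma sumw (k : ℕ) (S : Finset ℕ) (h : 0 ∉ S) :
    (∑ j ∈ S, if j = 0 then k else 1) = S.card := by
  rw [Finset.card_eq_sum_ones]
  refine Finset.sum_congr rfl fun j hj => ?_
  rw [if_neg]; rintro rfl; exact h hj

lemma sumw0 (k : ℕ) (S : Finset ℕ) (h : 0 ∈ S) :
    (∑ j ∈ S, if j = 0 then k else 1) = k + (S.erase 0).card := by
  rw [← Finset.add_sum_erase _ _ h, if_pos rfl, sumw k _ (Finset.notMem_erase 0 S)]

lemma sum_reindex (q k m : ℕ) (hk : 0 < k) (hkq : k ≤ q) :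
    ∑ s ∈ Finset.Icc (q - k) (q - 1), m.choose s
      = ∑ i ∈ Finset.Icc 1 k, m.choose (q - i) := by
  refine Finset.sum_nbij' (i := fun s => q - s) (j := fun i => q - i) ?_ ?_ ?_ ?_ ?_
  · intro a ha; simp only [Finset.mem_Icc] at ha ⊢; omega
  · intro a ha; simp only [Finset.mem_Icc] at ha ⊢; omega
  · intro a ha; simp only [Finset.mem_Icc] at ha; omega
  · intro a ha; simp only [Finset.mem_Icc] at ha; omega
  · intro a ha; simp only [Finset.mem_Icc] at ha
    congr 1; omega

theorem stmt12 (q k m : ℕ) (hk : 0 < k) (hkq : k ≤ q) (hqm : q ≤ m)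
    (w : ℕ → ℕ) (hw : w = fun i => if i = 0 then k else 1) :
    swingCount q w (Finset.range (m + 1)) 0 =
      ∑ i ∈ Finset.Icc 1 k, m.choose (q - i) ∧
    ∀ i ∈ Finset.range (m + 1), i ≠ 0 →
      swingCount q w (Finset.range (m + 1)) i =
        (m - 1).choose (q - 1) +
          (if k + 1 ≤ q then (m - 1).choose (q - k - 1) else 0) := by
  subst hw
  constructor
  · simp only [swingCount, if_true, eq_self_iff_true]
    set T := (Finset.range (m + 1)).erase 0 with hT
    have hTcard : T.card = m := by
      rw [hT, Finset.card_erase_of_mem (by simp), Finset.card_range]; omega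
    have hset : (T.powerset).filter
        (fun S => (∑ j ∈ S, if j = 0 then k else 1) < q ∧
          q ≤ (∑ j ∈ S, if j = 0 then k else 1) + k)
        = (Finset.Icc (q - k) (q - 1)).biUnion (fun s => T.powersetCard s) := by
      ext S
      simp only [Finset.mem_filter, Finset.mem_powerset, Finset.mem_biUnion,
        Finset.mem_Icc, Finset.mem_powersetCard]
      constructor
      · rintro ⟨hS, h1, h2⟩
        have h0S : 0 ∉ S := fun h => (Finset.mem_erase.1 (hS h)).1 rfl
        rw [sumw k S h0S] at h1 h2
        exact ⟨S.card, ⟨by omega, by omega⟩, hS, rfl⟩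
      · rintro ⟨s, ⟨hs1, hs2⟩, hS, rfl⟩
        have h0S : 0 ∉ S := fun h => (Finset.mem_erase.1 (hS h)).1 rfl
        rw [sumw k S h0S]
        exact ⟨hS, by omega, by omega⟩
    rw [hset, Finset.card_biUnion]
    · have : ∀ s ∈ Finset.Icc (q - k) (q - 1), (T.powersetCard s).card = m.choose s := by
        intro s _
        rw [Finset.card_powersetCard, hTcard]
      rw [Finset.sum_congr rfl this]
      exact sum_reindex q k m hk hkq
    · intro s _ t _ hst
      rw [Function.onFun, Finset.disjoint_left]
      intro S hS hS'
      rw [Finset.mem_powersetCard] at hS hS'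
      exact hst (hS.2 ▸ hS'.2)
  · intro i hi hi0
    simp only [swingCount, if_neg hi0]
    set T := (Finset.range (m + 1)).erase i with hT
    have h0T : (0 : ℕ) ∈ T := Finset.mem_erase.2 ⟨fun h => hi0 h.symm, by simp⟩
    have hTcard : T.card = m := by
      rw [hT, Finset.card_erase_of_mem hi, Finset.card_range]; omega
    have hTe : (T.erase 0).card = m - 1 := by
      rw [Finset.card_erase_of_mem h0T, hTcard]
    set F := T.powerset.filter
      (fun S => (∑ j ∈ S, if j = 0 then k else 1) < q ∧
        q ≤ (∑ j ∈ S, if j = 0 then k else 1) + 1) with hF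
    have key := Finset.card_filter_add_card_filter_not
      (s := F) (p := fun S => (0 : ℕ) ∈ S)
    have hB : F.filter (fun S => ¬ (0 : ℕ) ∈ S)
        = Finset.powersetCard (q - 1) (T.erase 0) := by
      ext S
      simp only [hF, Finset.filter_filter, Finset.mem_filter, Finset.mem_powerset,
        Finset.mem_powersetCard, Finset.subset_erase]
      constructor
      · rintro ⟨hS, ⟨h1, h2⟩, h0⟩
        rw [sumw k S h0] at h1 h2
        exact ⟨⟨hS, h0⟩, by omega⟩
      · rintro ⟨⟨hS, h0⟩, hc⟩
        rw [sumw k S h0] at *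
        exact ⟨hS, ⟨by omega, by omega⟩, h0⟩
    have hA : (F.filter (fun S => (0 : ℕ) ∈ S)).card
        = if k + 1 ≤ q then (m - 1).choose (q - k - 1) else 0 := by
      by_cases hkq1 : k + 1 ≤ q
      · rw [if_pos hkq1, ← hTe, ← Finset.card_powersetCard]
        refine Finset.card_bij' (fun S _ => S.erase 0) (fun S _ => insert 0 S) ?_ ?_ ?_ ?_
        · intro S hS
          beta_reduce
          simp only [hF, Finset.filter_filter, Finset.mem_filter, Finset.mem_powerset] at hS
          obtain ⟨hS, ⟨h1, h2⟩, h0⟩ := hS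
          rw [sumw0 k S h0] at h1 h2
          rw [Finset.mem_powersetCard]
          exact ⟨Finset.erase_subset_erase _ hS, by omega⟩
        · intro S hS
          beta_reduce
          rw [Finset.mem_powersetCard, Finset.subset_erase] at hS
          obtain ⟨⟨hS, h0⟩, hc⟩ := hS
          simp only [hF, Finset.filter_filter, Finset.mem_filter, Finset.mem_powerset]
          have h0' : (0 : ℕ) ∈ insert 0 S := Finset.mem_insert_self 0 S
          have he : (insert 0 S).erase 0 = S := Finset.erase_insert h0
          rw [sumw0 k _ h0', he]
          exact ⟨Finset.insert_subset h0T hS, ⟨by omega, by omega⟩, h0'⟩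
        · intro S hS
          beta_reduce
          simp only [hF, Finset.filter_filter, Finset.mem_filter, Finset.mem_powerset] at hS
          exact Finset.insert_erase hS.2.2
        · intro S hS
          beta_reduce
          rw [Finset.mem_powersetCard, Finset.subset_erase] at hS
          exact Finset.erase_insert hS.1.2
      · rw [if_neg hkq1]
        rw [Finset.card_eq_zero, Finset.filter_eq_empty_iff]
        intro S hS
        simp only [hF, Finset.mem_filter, Finset.mem_powerset] at hS
        obtain ⟨hS, h1, h2⟩ := hS
        intro h0
        rw [sumw0 k S h0] at h1
        omega
    rw [← key, hA, hB, Finset.card_powersetCard, hTe]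
    omega
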